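/- The min-max number of any argument in a strongly admissible labelling of a framework with n arguments is at most 2n: if Lab is strongly admissible with min-max numbering MM and |Ar| = n, then MM(x) ≤ 2n for every in/out-labelled argument x. -/
import Mathlib


inductive Label where
  | inn | out | und
deriving DecidableEq

/-- A labelling is admissible if every in-labelled argument has all its attackers
labelled out, and every out-labelled argument has at least one in-labelled attacker. -/
def Admissible {Ar : Type*} (att : Ar → Ar → Prop) (L : Ar → Label) : Prop :=
  (∀ x, L x = Label.inn → ∀ y, att y x → L y = Label.out) ∧
  (∀ x, L x = Label.out → ∃ y, att y x ∧ L y = Label.inn)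

/-- A min-max numbering (with only natural-number values): in-arguments are numbered
1 + max of the numbers of their out-labelled attackers (max ∅ = 0), and out-arguments
1 + min of the numbers of their in-labelled attackers. -/
def IsMinMax {Ar : Type*} (att : Ar → Ar → Prop) (L : Ar → Label) (MM : Ar → ℕ) : Prop :=
  (∀ x, L x = Label.inn → MM x = sSup (MM '' {y | att y x ∧ L y = Label.out}) + 1) ∧
  (∀ x, L x = Label.out → MM x = sInf (MM '' {y | att y x ∧ L y = Label.inn}) + 1)

/-- Strongly admissible: admissible and admitting a min-max numbering with only
natural-number (finite) values. -/
def StronglyAdmissible {Ar : Type*} (att : Ar → Ar → Prop) (L : Ar → Label) : Prop :=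
  Admissible att L ∧ ∃ MM : Ar → ℕ, IsMinMax att L MM

/-- Complete labelling: admissible, and every undec argument has an undec attacker
and no in-labelled attacker. -/
def CompleteLab {Ar : Type*} (att : Ar → Ar → Prop) (L : Ar → Label) : Prop :=
  Admissible att L ∧
  ∀ x, L x = Label.und →
    (∃ y, att y x ∧ L y = Label.und) ∧ ∀ y, att y x → L y ≠ Label.inn

/-- The order on labellings: Lab1 ⊑ Lab2 iff in(Lab1) ⊆ in(Lab2) and out(Lab1) ⊆ out(Lab2). -/
def LabLe {Ar : Type*} (L1 L2 : Ar → Label) : Prop :=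
  (∀ x, L1 x = Label.inn → L2 x = Label.inn) ∧
  (∀ x, L1 x = Label.out → L2 x = Label.out)

section Aux

variable {Ar : Type*} [Fintype Ar] {att : Ar → Ar → Prop} {Lab : Ar → Label} {MM : Ar → ℕ}

/-- An in-argument with number > 1 has an out-attacker whose number is one less. -/
lemma step_in (hmm : IsMinMax att Lab MM) {x : Ar} (hx : Lab x = Label.inn)
    (hpos : 1 < MM x) :
    ∃ y, att y x ∧ Lab y = Label.out ∧ MM y = MM x - 1 := by
  have h := hmm.1 x hx
  set S := MM '' {y | att y x ∧ Lab y = Label.out} with hS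
  rcases Set.eq_empty_or_nonempty S with he | hne
  · rw [he] at h
    simp only [csSup_empty, Nat.bot_eq_zero] at h
    omega
  · have hmem := Nat.sSup_mem hne (Set.Finite.bddAbove (Set.toFinite S))
    rcases hmem with ⟨y, ⟨hatt, hlab⟩, hy⟩
    exact ⟨y, hatt, hlab, by omega⟩

/-- An out-argument has an in-attacker whose number is one less. -/
lemma step_out (hadm : Admissible att Lab) (hmm : IsMinMax att Lab MM) {x : Ar}
    (hx : Lab x = Label.out) :
    ∃ y, att y x ∧ Lab y = Label.inn ∧ MM y = MM x - 1 ∧ 1 ≤ MM x := by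
  have h := hmm.2 x hx
  set S := MM '' {y | att y x ∧ Lab y = Label.inn} with hS
  rcases hadm.2 x hx with ⟨z, hz, hzl⟩
  have hne : S.Nonempty := ⟨MM z, ⟨z, ⟨hz, hzl⟩, rfl⟩⟩
  have hmem := Nat.sInf_mem hne
  rcases hmem with ⟨y, ⟨hatt, hlab⟩, hy⟩
  exact ⟨y, hatt, hlab, by omega, by omega⟩

/-- Parity: in-arguments have odd numbers, out-arguments even. -/
lemma parity (hadm : Admissible att Lab) (hmm : IsMinMax att Lab MM) :
    ∀ k x, MM x = k →
      (Lab x = Label.inn → k % 2 = 1) ∧ (Lab x = Label.out → k % 2 = 0) := by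
  intro k
  induction k using Nat.strong_induction_on with
  | _ k ih =>
    intro x hk
    constructor
    · intro hx
      by_cases hpos : 1 < MM x
      · rcases step_in hmm hx hpos with ⟨y, _, hyl, hy⟩
        have := (ih (MM y) (by omega) y rfl).2 hyl
        omega
      · have h := hmm.1 x hx
        omega
    · intro hx
      rcases step_out hadm hmm hx with ⟨y, _, hyl, hy, hge⟩
      have := (ih (MM y) (by omega) y rfl).1 hyl
      omega

/-- Every odd value below the number of an in/out argument is attained by some
in-argument. -/
lemma exists_in_of_odd_le (hadm : Admissible att Lab) (hmm : IsMinMax att Lab MM) :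
    ∀ k x, Lab x ≠ Label.und → MM x = k → ∀ v, v % 2 = 1 → v ≤ k →
      ∃ y, Lab y = Label.inn ∧ MM y = v := by
  intro k
  induction k using Nat.strong_induction_on with
  | _ k ih =>
    intro x hx hk v hv hvk
    cases hxl : Lab x with
    | und => exact absurd hxl hx
    | inn =>
      rcases eq_or_lt_of_le hvk with rfl | hlt
      · exact ⟨x, hxl, hk⟩
      · have hpos : 1 < MM x := by omega
        rcases step_in hmm hxl hpos with ⟨y, _, hyl, hy⟩
        exact ih (MM y) (by omega) y (by simp [hyl]) rfl v hv (by omega)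
    | out =>
      have hpar := (parity hadm hmm k x hk).2 hxl
      have hlt : v < k := by omega
      rcases step_out hadm hmm hxl with ⟨y, _, hyl, hy, hge⟩
      exact ih (MM y) (by omega) y (by simp [hyl]) rfl v hv (by omega)

end Aux

/-- In a strongly admissible labelling of a framework with n arguments,
every in/out argument has min-max number at most 2n. -/
theorem minMax_le_two_card
    {Ar : Type*} [Fintype Ar] (att : Ar → Ar → Prop) (Lab : Ar → Label) (MM : Ar → ℕ)
    (hadm : Admissible att Lab) (hmm : IsMinMax att Lab MM) (n : ℕ)
    (hcard : Fintype.card Ar = n) :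
    ∀ x, Lab x ≠ Label.und → MM x ≤ 2 * n := by
  intro x hx
  set m := MM x with hm
  have key := exists_in_of_odd_le hadm hmm m x hx rfl
  -- build an injection from Fin ((m+1)/2) into Ar
  let f : Fin ((m + 1) / 2) → Ar := fun i =>
    Classical.choose (key (2 * (i : ℕ) + 1) (by omega) (by omega))
  have hf : ∀ i, Lab (f i) = Label.inn ∧ MM (f i) = 2 * (i : ℕ) + 1 := fun i =>
    Classical.choose_spec (key (2 * (i : ℕ) + 1) (by omega) (by omega))
  have hinj : Function.Injective f := by
    intro i j hij
    have hi := (hf i).2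
    have hj := (hf j).2
    rw [hij] at hi
    have : (i : ℕ) = (j : ℕ) := by omega
    exact Fin.ext this
  have hcardle : (m + 1) / 2 ≤ n := by
    have := Fintype.card_le_of_injective f hinj
    simpa [hcard] using this
  omega
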